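/- For every ε > 0 and every o ∈ ℝ, the supremum over u ∈ [0, 1] of o·u − ε·(u·ln u + (1 − u)·ln(1 − u)) (with the convention 0·ln 0 = 0) equals ε·ln(e^{o/ε} + 1), i.e. the biconjugate M_ε** coincides with M_ε. -/

import Mathlib

open Real

lemma aux_upper (t u : ℝ) (h0 : 0 < u) (h1 : u < 1) :
    t * u - (u * Real.log u + (1 - u) * Real.log (1 - u)) ≤ Real.log (Real.exp t + 1) := by
  have h1' : 0 < 1 - u := by linarith
  have hx : Real.exp t / u ∈ Set.Ioi (0:ℝ) := by
    exact div_pos (Real.exp_pos t) h0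
  have hy : (1:ℝ) / (1 - u) ∈ Set.Ioi (0:ℝ) := Set.mem_Ioi.2 (by positivity)
  have hc := (strictConcaveOn_log_Ioi.concaveOn).2 hx hy (le_of_lt h0) (le_of_lt h1')
    (by ring)
  simp only [smul_eq_mul] at hc
  have hsum : u * (Real.exp t / u) + (1 - u) * (1 / (1 - u)) = Real.exp t + 1 := by
    field_simp
  rw [hsum] at hc
  have e1 : Real.log (Real.exp t / u) = t - Real.log u := by
    rw [Real.log_div (Real.exp_ne_zero t) (ne_of_gt h0), Real.log_exp]
  have e2 : Real.log (1 / (1 - u)) = - Real.log (1 - u) := by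
    rw [Real.log_div one_ne_zero (ne_of_gt h1'), Real.log_one]; ring
  rw [e1, e2] at hc
  nlinarith [hc]

/-- For every `ε > 0` and `o ∈ ℝ`, the supremum over `u ∈ [0,1]` of
`o·u − ε·(u·ln u + (1 − u)·ln(1 − u))` (convention `0·ln 0 = 0`) equals
`ε·ln(e^{o/ε} + 1)`: the biconjugate `M_ε**` coincides with `M_ε`. -/
theorem biconjugate_logSumExp (ε o : ℝ) (hε : 0 < ε) :
    IsLUB
      ((fun u : ℝ => o * u - ε * (u * Real.log u + (1 - u) * Real.log (1 - u))) ''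
        Set.Icc (0 : ℝ) 1)
      (ε * Real.log (Real.exp (o / ε) + 1)) := by
  set t := o / ε with ht
  have hεo : ε * t = o := by rw [ht]; field_simp
  have hE : 0 < Real.exp t := Real.exp_pos t
  have hD : 0 < Real.exp t + 1 := by linarith
  set u0 : ℝ := Real.exp t / (Real.exp t + 1) with hu0
  have hu0pos : 0 < u0 := div_pos hE hD
  have hu0lt : u0 < 1 := (div_lt_one hD).2 (by linarith)
  have h1u0 : 1 - u0 = 1 / (Real.exp t + 1) := by
    rw [hu0, eq_div_iff hD.ne', sub_mul, div_mul_cancel₀ _ hD.ne']; ring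
  apply IsGreatest.isLUB
  constructor
  · -- membership: value at u0 equals the claimed sup
    refine ⟨u0, ⟨le_of_lt hu0pos, le_of_lt hu0lt⟩, ?_⟩
    have hlogu0 : Real.log u0 = t - Real.log (Real.exp t + 1) := by
      rw [hu0, Real.log_div (Real.exp_ne_zero t) (ne_of_gt hD), Real.log_exp]
    have hlog1u0 : Real.log (1 - u0) = - Real.log (Real.exp t + 1) := by
      rw [h1u0, Real.log_div one_ne_zero (ne_of_gt hD), Real.log_one]; ring
    simp only [hlogu0, hlog1u0]
    have : o * u0 = ε * (t * u0) := by rw [← hεo]; ring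
    rw [this]; ring
  · rintro y ⟨u, ⟨hu0', hu1'⟩, rfl⟩
    rcases eq_or_lt_of_le hu0' with h | h
    · have hL : Real.log (Real.exp t + 1) > 0 := Real.log_pos (by linarith)
      simp only [← h]
      norm_num [Real.log_one]
      exact le_of_lt (mul_pos hε hL)
    rcases eq_or_lt_of_le hu1' with h1 | h1
    · have hL : t < Real.log (Real.exp t + 1) :=
        (Real.lt_log_iff_exp_lt hD).2 (by linarith)
      simp only [h1]
      norm_num [Real.log_one]
      nlinarith [mul_lt_mul_of_pos_left hL hε]
    · have key := aux_upper t u h h1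
      have h2 := mul_le_mul_of_nonneg_left key (le_of_lt hε)
      have h3 : o * u - ε * (u * Real.log u + (1 - u) * Real.log (1 - u))
          = ε * (t * u - (u * Real.log u + (1 - u) * Real.log (1 - u))) := by
        rw [← hεo]; ring
      simpa [h3] using h2
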